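/- Let H be a nonempty convex subset of a real vector space and let R : H → [0,1] be convex. For i = 1, …, s let R_i : H → [0,1], ℓ_i : H → [0,1], h_i ∈ H, and ε_i ≥ 0 be such that |R(h) − R_i(h)| ≤ 2ε_i for all h ∈ H. Let h̄ = (1/s) Σ_{i=1}^s h_i and let W = Σ_{i=1}^s ℓ_i(h_i) − inf_{h∈H} Σ_{i=1}^s ℓ_i(h) be the regret. Then R(h̄) − inf_{h∈H} R(h) ≤ (4/s) Σ_{i=1}^s ε_i + W/s + (1/s) Σ_{i=1}^s (R_i(h_i) − ℓ_i(h_i)) + sup_{h∈H} (1/s) Σ_{i=1}^s (ℓ_i(h) − R_i(h)). -/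

import Mathlib

open Finset

/-- Deterministic core of Theorems 2 and 4 (online subroutine with averaging for
online-to-batch conversion, convex loss): the excess risk of the averaged
hypothesis is bounded via the per-step discrepancies `ε i`, the regret `W`, and
the deviations between conditional risks and observed losses. -/
theorem macro_convex_online_bound
    {V : Type*} [AddCommGroup V] [Module ℝ V]
    (H : Set V) (hHconv : Convex ℝ H) (hHne : H.Nonempty)
    (R : V → ℝ) (hRconv : ConvexOn ℝ H R)
    (hR01 : ∀ h ∈ H, R h ∈ Set.Icc (0 : ℝ) 1)
    (s : ℕ) (hs : 1 ≤ s)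
    (Ri li : Fin s → V → ℝ)
    (hRi01 : ∀ i, ∀ h ∈ H, Ri i h ∈ Set.Icc (0 : ℝ) 1)
    (hli01 : ∀ i, ∀ h ∈ H, li i h ∈ Set.Icc (0 : ℝ) 1)
    (h : Fin s → V) (hh : ∀ i, h i ∈ H)
    (ε : Fin s → ℝ) (hε : ∀ i, 0 ≤ ε i)
    (hdisc : ∀ i, ∀ x ∈ H, |R x - Ri i x| ≤ 2 * ε i) :
    R ((s : ℝ)⁻¹ • ∑ i, h i) - ⨅ x : H, R x ≤
      (4 / (s : ℝ)) * ∑ i, ε i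
      + (∑ i, li i (h i) - ⨅ x : H, ∑ i, li i x) / (s : ℝ)
      + (1 / (s : ℝ)) * ∑ i, (Ri i (h i) - li i (h i))
      + ⨆ x : H, (1 / (s : ℝ)) * ∑ i, (li i (x : V) - Ri i (x : V)) := by
  haveI : Nonempty H := hHne.to_subtype
  have hs0 : (0:ℝ) < s := by exact_mod_cast hs
  have hsne : (s:ℝ) ≠ 0 := hs0.ne'
  set S := ⨆ x : H, (1 / (s : ℝ)) * ∑ i, (li i (x : V) - Ri i (x : V)) with hSdef
  set A := ⨅ x : H, R (x : V) with hAdef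
  set B := ⨅ x : H, ∑ i, li i (x : V) with hBdef
  -- sup bounded above
  have hSbdd : BddAbove (Set.range fun x : H => (1/(s:ℝ)) * ∑ i, (li i (x:V) - Ri i (x:V))) := by
    refine ⟨1, ?_⟩
    rintro _ ⟨x, rfl⟩
    have hsum : ∑ i, (li i (x:V) - Ri i (x:V)) ≤ (s:ℝ) := by
      calc ∑ i, (li i (x:V) - Ri i (x:V)) ≤ ∑ _i : Fin s, (1:ℝ) := by
            apply Finset.sum_le_sum
            intro i _
            have h1 := (hli01 i x x.2).2
            have h2 := (hRi01 i x x.2).1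
            linarith
        _ = (s:ℝ) := by simp
    have := mul_le_mul_of_nonneg_left hsum (by positivity : (0:ℝ) ≤ 1/(s:ℝ))
    calc (1/(s:ℝ)) * ∑ i, (li i (x:V) - Ri i (x:V)) ≤ (1/(s:ℝ)) * (s:ℝ) := this
      _ = 1 := by field_simp
  have hS_ge : ∀ x : H, (1/(s:ℝ)) * ∑ i, (li i (x:V) - Ri i (x:V)) ≤ S :=
    fun x => le_ciSup hSbdd x
  have hBbdd : BddBelow (Set.range fun x : H => ∑ i, li i (x:V)) := by
    refine ⟨0, ?_⟩
    rintro _ ⟨x, rfl⟩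
    exact Finset.sum_nonneg fun i _ => (hli01 i x x.2).1
  -- key: B - (2∑ε + s*S) ≤ s * A
  have hkey : ∀ x : H, (B - (2 * ∑ i, ε i + (s:ℝ) * S)) / (s:ℝ) ≤ R (x:V) := by
    intro x
    have h1 : B ≤ ∑ i, li i (x:V) := ciInf_le hBbdd x
    have h2 : ∑ i, (li i (x:V) - Ri i (x:V)) ≤ (s:ℝ) * S := by
      have := hS_ge x
      rw [one_div, inv_mul_le_iff₀ hs0] at this
      exact this
    have h2' : ∑ i, li i (x:V) - ∑ i, Ri i (x:V) ≤ (s:ℝ) * S := by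
      rw [← Finset.sum_sub_distrib]; exact h2
    have h3 : ∑ i, Ri i (x:V) ≤ (s:ℝ) * R (x:V) + 2 * ∑ i, ε i := by
      have : ∑ i, Ri i (x:V) ≤ ∑ i, (R (x:V) + 2 * ε i) := by
        apply Finset.sum_le_sum
        intro i _
        have := abs_le.mp (hdisc i x x.2)
        linarith [this.1]
      calc ∑ i, Ri i (x:V) ≤ ∑ i, (R (x:V) + 2 * ε i) := this
        _ = (s:ℝ) * R (x:V) + 2 * ∑ i, ε i := by
            rw [Finset.sum_add_distrib, ← Finset.mul_sum]
            simp [Finset.sum_const, Finset.card_univ, nsmul_eq_mul]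
    rw [div_le_iff₀ hs0]
    nlinarith [h1, h2', h3]
  have hA : (B - (2 * ∑ i, ε i + (s:ℝ) * S)) / (s:ℝ) ≤ A := le_ciInf hkey
  have hA' : B - (2 * ∑ i, ε i + (s:ℝ) * S) ≤ (s:ℝ) * A := by
    rw [div_le_iff₀ hs0] at hA; linarith [hA]
  -- Jensen
  have hjensen : R ((s:ℝ)⁻¹ • ∑ i, h i) ≤ ∑ i, (1/(s:ℝ)) * R (h i) := by
    have hw1 : ∑ _i : Fin s, (1/(s:ℝ)) = 1 := by
      simp; field_simp
    have := hRconv.map_sum_le (t := Finset.univ) (w := fun _ : Fin s => (1/(s:ℝ)))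
      (p := h) (fun i _ => by positivity) hw1 (fun i _ => hh i)
    have hrw : ∑ i : Fin s, (1/(s:ℝ)) • h i = (s:ℝ)⁻¹ • ∑ i, h i := by
      rw [Finset.smul_sum]; simp [one_div]
    rwa [hrw] at this
  have hjensen' : (s:ℝ) * R ((s:ℝ)⁻¹ • ∑ i, h i) ≤ ∑ i, R (h i) := by
    have : ∑ i, (1/(s:ℝ)) * R (h i) = (1/(s:ℝ)) * ∑ i, R (h i) := by
      rw [Finset.mul_sum]
    rw [this] at hjensen
    rw [one_div_mul_eq_div, le_div_iff₀ hs0] at hjensen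
    linarith [hjensen]
  have hF2 : ∑ i, R (h i) ≤ ∑ i, Ri i (h i) + 2 * ∑ i, ε i := by
    have : ∑ i, R (h i) ≤ ∑ i, (Ri i (h i) + 2 * ε i) := by
      apply Finset.sum_le_sum
      intro i _
      have := abs_le.mp (hdisc i (h i) (hh i))
      linarith [this.2]
    calc ∑ i, R (h i) ≤ ∑ i, (Ri i (h i) + 2 * ε i) := this
      _ = ∑ i, Ri i (h i) + 2 * ∑ i, ε i := by
          rw [Finset.sum_add_distrib, ← Finset.mul_sum]
  have hF3 : ∑ i, Ri i (h i) = ∑ i, li i (h i) + ∑ i, (Ri i (h i) - li i (h i)) := by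
    rw [← Finset.sum_add_distrib]; simp
  rw [← mul_le_mul_iff_right₀ hs0]
  have hexp : (s:ℝ) * ((4 / (s : ℝ)) * ∑ i, ε i
      + (∑ i, li i (h i) - B) / (s : ℝ)
      + (1 / (s : ℝ)) * ∑ i, (Ri i (h i) - li i (h i))
      + S)
      = 4 * ∑ i, ε i + (∑ i, li i (h i) - B) + ∑ i, (Ri i (h i) - li i (h i)) + (s:ℝ) * S := by
    field_simp
  rw [mul_sub, hexp]
  linarith [hjensen', hF2, hF3, hA']
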